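/- If probability measures μₙ on ℝ converge weakly to μ = f·λ with f a continuous probability density, then sup over all intervals I ⊆ ℝ of |μₙ(I) − μ(I)| tends to 0 as n → ∞. -/

import Mathlib

open MeasureTheory Filter Topology Set
open scoped ENNReal NNReal

noncomputable def stmt1mu (f : ℝ → ℝ) : Measure ℝ :=
  volume.withDensity fun x => ENNReal.ofReal (f x)

lemma stmt1mu_apply {f : ℝ → ℝ} (hf_nonneg : ∀ x, 0 ≤ f x) (hf_int : Integrable f)
    {I : Set ℝ} (hI : MeasurableSet I) :
    ((stmt1mu f) I).toReal = ∫ x in I, f x := by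
  rw [stmt1mu, withDensity_apply _ hI]
  rw [← ofReal_integral_eq_lintegral_ofReal hf_int.integrableOn
    (Filter.Eventually.of_forall fun x => hf_nonneg x)]
  exact ENNReal.toReal_ofReal (integral_nonneg fun x => hf_nonneg x)

lemma stmt1mu_prob {f : ℝ → ℝ} (hf_nonneg : ∀ x, 0 ≤ f x) (hf_int : Integrable f)
    (hf_one : ∫ x, f x = 1) : IsProbabilityMeasure (stmt1mu f) := by
  constructor
  rw [stmt1mu, withDensity_apply _ MeasurableSet.univ, Measure.restrict_univ,
    ← ofReal_integral_eq_lintegral_ofReal hf_int (Filter.Eventually.of_forall hf_nonneg),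
    hf_one, ENNReal.ofReal_one]

lemma stmt1mu_singleton (f : ℝ → ℝ) (x : ℝ) : (stmt1mu f) {x} = 0 := by
  rw [stmt1mu, withDensity_apply _ (measurableSet_singleton x)]
  rw [Measure.restrict_eq_zero.mpr (by simp)]
  simp

lemma stmt1F_cont {f : ℝ → ℝ} (hf_int : Integrable f) :
    Continuous fun x => ∫ t in Iic x, f t := by
  have h : ∀ x : ℝ, ∫ t in Iic x, f t = (∫ t in (0:ℝ)..x, f t) + ∫ t in Iic (0:ℝ), f t := by
    intro x
    rw [← intervalIntegral.integral_Iic_sub_Iic hf_int.integrableOn hf_int.integrableOn]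
    ring
  have : (fun x => ∫ t in Iic x, f t) = fun x => (∫ t in (0:ℝ)..x, f t) + ∫ t in Iic (0:ℝ), f t := funext h
  rw [this]
  exact (hf_int.continuous_primitive 0).add continuous_const

lemma stmt1F_mono {f : ℝ → ℝ} (hf_nonneg : ∀ x, 0 ≤ f x) (hf_int : Integrable f) :
    Monotone fun x => ∫ t in Iic x, f t := by
  intro a b hab
  exact setIntegral_mono_set hf_int.integrableOn
    (Filter.Eventually.of_forall hf_nonneg) (HasSubset.Subset.eventuallyLE (Iic_subset_Iic.2 hab))

lemma stmt1F_top {f : ℝ → ℝ} (hf_nonneg : ∀ x, 0 ≤ f x) (hf_int : Integrable f)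
    (hf_one : ∫ x, f x = 1) :
    Tendsto (fun x => ((stmt1mu f) (Iic x)).toReal) atTop (𝓝 1) := by
  haveI := stmt1mu_prob hf_nonneg hf_int hf_one
  have h := tendsto_measure_Iic_atTop (stmt1mu f)
  rw [measure_univ] at h
  have := (ENNReal.tendsto_toReal (by norm_num : (1:ℝ≥0∞) ≠ ⊤)).comp h
  exact this

lemma stmt1F_bot {f : ℝ → ℝ} (hf_nonneg : ∀ x, 0 ≤ f x) (hf_int : Integrable f)
    (hf_one : ∫ x, f x = 1) :
    Tendsto (fun x => ((stmt1mu f) (Iic x)).toReal) atBot (𝓝 0) := by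
  haveI := stmt1mu_prob hf_nonneg hf_int hf_one
  have h := tendsto_measure_iInter_atBot (μ := stmt1mu f)
    (fun x : ℝ => measurableSet_Iic.nullMeasurableSet) monotone_Iic ⟨0, measure_ne_top _ _⟩
  have hempty : (⋂ x : ℝ, Iic x) = (∅ : Set ℝ) := by
    ext y
    simp only [mem_iInter, mem_Iic, mem_empty_iff_false, iff_false, not_forall, not_le]
    exact ⟨y - 1, by linarith⟩
  rw [hempty, measure_empty] at h
  have := (ENNReal.tendsto_toReal (by norm_num : (0:ℝ≥0∞) ≠ ⊤)).comp h
  exact this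

lemma stmt1_pointwise {f : ℝ → ℝ} (hf_cont : Continuous f) (hf_nonneg : ∀ x, 0 ≤ f x)
    (hf_int : Integrable f) (hf_one : ∫ x, f x = 1)
    (μn : ℕ → Measure ℝ) [∀ n, IsProbabilityMeasure (μn n)]
    (hweak : ∀ g : BoundedContinuousFunction ℝ ℝ,
      Tendsto (fun n => ∫ x, g x ∂(μn n)) atTop (𝓝 (∫ x, g x * f x)))
    (x : ℝ) :
    Tendsto (fun n => ((μn n) (Iic x)).toReal) atTop (𝓝 (((stmt1mu f) (Iic x)).toReal)) := by
  haveI hPP := stmt1mu_prob hf_nonneg hf_int hf_one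
  set P : ProbabilityMeasure ℝ := ⟨stmt1mu f, hPP⟩ with hPdef
  set Pn : ℕ → ProbabilityMeasure ℝ := fun n => ⟨μn n, inferInstance⟩ with hPndef
  have hP : Tendsto Pn atTop (𝓝 P) := by
    rw [ProbabilityMeasure.tendsto_iff_forall_integral_tendsto]
    intro g
    have hint : ∫ y, g y ∂(P : Measure ℝ) = ∫ y, g y * f y := by
      show ∫ y, g y ∂(stmt1mu f) = _
      have hm : Measurable fun y => Real.toNNReal (f y) := hf_cont.measurable.real_toNNReal
      rw [stmt1mu,
        show (fun y => ENNReal.ofReal (f y)) = (fun y => ((Real.toNNReal (f y) : ℝ≥0) : ℝ≥0∞))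
          from rfl,
        integral_withDensity_eq_integral_smul hm]
      congr 1; funext y
      rw [NNReal.smul_def, Real.coe_toNNReal _ (hf_nonneg y), smul_eq_mul, mul_comm]
    rw [hint]; exact hweak g
  have hfr : P (frontier (Iic x)) = 0 := by
    rw [frontier_Iic]
    have : (P : Measure ℝ) {x} = 0 := stmt1mu_singleton f x
    simp [← ProbabilityMeasure.ennreal_coeFn_eq_coeFn_toMeasure, this]
  have key := ProbabilityMeasure.tendsto_measure_of_null_frontier_of_tendsto hP hfr
  have := (NNReal.continuous_coe.tendsto _).comp key
  convert this using 1
  all_goals rfl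

lemma stmt1_polya {F : ℝ → ℝ} (Fcont : Continuous F) (Fmono : Monotone F)
    (Ftop : Tendsto F atTop (𝓝 1)) (Fbot : Tendsto F atBot (𝓝 0))
    {Fn : ℕ → ℝ → ℝ} (hmono : ∀ n, Monotone (Fn n)) (h0 : ∀ n x, 0 ≤ Fn n x)
    (h1 : ∀ n x, Fn n x ≤ 1)
    (hconv : ∀ x, Tendsto (fun n => Fn n x) atTop (𝓝 (F x))) :
    ∀ δ > 0, ∃ N : ℕ, ∀ n ≥ N, ∀ x, |Fn n x - F x| ≤ δ := by
  intro δ hδ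
  have hF0 : ∀ x, 0 ≤ F x := fun x =>
    ge_of_tendsto (hconv x) (Eventually.of_forall fun n => h0 n x)
  have hF1 : ∀ x, F x ≤ 1 := fun x =>
    le_of_tendsto (hconv x) (Eventually.of_forall fun n => h1 n x)
  obtain ⟨k, hk⟩ := exists_nat_gt (3 / δ)
  have hkpos : (0 : ℝ) < k := lt_trans (by positivity) hk
  have hk1 : 1 ≤ k := by exact_mod_cast Nat.one_le_iff_ne_zero.mpr (by
    rintro rfl; simp at hkpos)
  have hkδ : 3 / (k : ℝ) < δ := by
    rw [div_lt_iff₀ hkpos]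
    rw [div_lt_iff₀ hδ] at hk
    nlinarith
  have h1k : (0 : ℝ) < 1 / k := by positivity
  -- grid
  have hgrid : ∀ i : ℕ, ∃ x : ℝ, 1 ≤ i ∧ i < k → F x = i / k := by
    intro i
    by_cases h : 1 ≤ i ∧ i < k
    · have hpos : (0 : ℝ) < i / k := by
        have : (1:ℝ) ≤ i := by exact_mod_cast h.1
        positivity
      have hlt1 : (i : ℝ) / k < 1 := by
        rw [div_lt_one hkpos]; exact_mod_cast h.2
      obtain ⟨a, ha⟩ := (Fbot.eventually_lt_const hpos).exists
      obtain ⟨b, hb⟩ := (Ftop.eventually_const_lt hlt1).exists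
      have hab : a ≤ b := by
        by_contra h'
        push_neg at h'
        exact absurd (Fmono h'.le) (by linarith)
      obtain ⟨x, _, hx⟩ := intermediate_value_Icc hab Fcont.continuousOn ⟨ha.le, hb.le⟩
      exact ⟨x, fun _ => hx⟩
    · exact ⟨0, fun hc => absurd hc h⟩
  choose g hg using hgrid
  -- N
  have hev : ∀ᶠ n in atTop, ∀ i ∈ Finset.range k, |Fn n (g i) - F (g i)| ≤ 1 / k := by
    rw [Filter.eventually_all_finset]
    intro i _
    have := Metric.tendsto_nhds.mp (hconv (g i)) (1 / k) h1k
    filter_upwards [this] with n hn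
    rw [Real.dist_eq] at hn
    exact hn.le
  obtain ⟨N, hN⟩ := Filter.eventually_atTop.mp hev
  refine ⟨N, fun n hn x => ?_⟩
  set i := ⌊(k : ℝ) * F x⌋₊ with hidef
  have hfl1 : (i : ℝ) ≤ k * F x := Nat.floor_le (mul_nonneg hkpos.le (hF0 x))
  have hfl2 : (k : ℝ) * F x < i + 1 := Nat.lt_floor_add_one _
  have hilow : (i : ℝ) / k ≤ F x := by rw [div_le_iff₀ hkpos]; linarith
  have hihigh : F x < ((i : ℝ) + 1) / k := by rw [lt_div_iff₀ hkpos]; linarith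
  have hikn : i ≤ k := by
    have : (i : ℝ) ≤ k := by nlinarith [hF1 x]
    exact_mod_cast this
  have hsum : ((i : ℝ) + 1) / k = (i : ℝ) / k + 1 / k := by ring
  have h3k : (3:ℝ) / k = 1/k + 1/k + 1/k := by ring
  have h2k : (2:ℝ) / k = 1/k + 1/k := by ring
  -- upper bound
  have hup : Fn n x ≤ F x + 3 / k := by
    by_cases hcase : i + 1 < k
    · have hz : F (g (i + 1)) = ((i : ℝ) + 1) / k := by
        have := hg (i + 1) ⟨by omega, hcase⟩
        push_cast at this
        exact this
      have hxz : x ≤ g (i + 1) := by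
        by_contra h'
        push_neg at h'
        have := Fmono h'.le
        rw [hz] at this
        linarith
      have habs := abs_le.mp (hN n hn (i + 1) (Finset.mem_range.mpr hcase))
      have h2 : Fn n (g (i + 1)) ≤ F (g (i + 1)) + 1 / k := by linarith [habs.2]
      have h3 : Fn n x ≤ Fn n (g (i + 1)) := hmono n hxz
      rw [hz, hsum] at h2
      linarith
    · -- k ≤ i + 1, so F x ≥ 1 - 2/k
      have hki : (k : ℝ) ≤ i + 1 := by exact_mod_cast not_lt.mp hcase
      have hdiv : (k : ℝ) / k ≤ ((i : ℝ) + 1) / k := by gcongr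
      rw [div_self (ne_of_gt hkpos), hsum] at hdiv
      linarith [h1 n x]
  -- lower bound
  have hlow : F x - 3 / k ≤ Fn n x := by
    by_cases hcase : 2 ≤ i
    · have hy : F (g (i - 1)) = (i : ℝ) / k - 1 / k := by
        have := hg (i - 1) ⟨by omega, by omega⟩
        rw [Nat.cast_sub (by omega : 1 ≤ i)] at this
        rw [this]; push_cast; ring
      have hyx : g (i - 1) ≤ x := by
        by_contra h'
        push_neg at h'
        have := Fmono h'.le
        rw [hy] at this
        linarith
      have habs := abs_le.mp (hN n hn (i - 1) (Finset.mem_range.mpr (by omega)))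
      have h2 : F (g (i - 1)) - 1 / k ≤ Fn n (g (i - 1)) := by linarith [habs.1]
      have h3 : Fn n (g (i - 1)) ≤ Fn n x := hmono n hyx
      rw [hy] at h2
      linarith
    · -- i ≤ 1 : F x < 2/k
      have hi1 : (i : ℝ) ≤ 1 := by exact_mod_cast Nat.lt_succ_iff.mp (not_le.mp hcase)
      have hdiv : (i : ℝ) / k ≤ 1 / k := by gcongr
      have := h0 n x
      linarith
  rw [abs_le]
  constructor <;> linarith

lemma stmt1_toReal_Ioc (ρ : Measure ℝ) [IsProbabilityMeasure ρ] {y b : ℝ} (h : y ≤ b) :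
    (ρ (Ioc y b)).toReal = (ρ (Iic b)).toReal - (ρ (Iic y)).toReal := by
  rw [← Iic_sdiff_Iic, measure_diff (Iic_subset_Iic.2 h) measurableSet_Iic.nullMeasurableSet
    (measure_ne_top _ _),
    ENNReal.toReal_sub_of_le (measure_mono (Iic_subset_Iic.2 h)) (measure_ne_top _ _)]

lemma stmt1_toReal_Ioi (ρ : Measure ℝ) [IsProbabilityMeasure ρ] (a : ℝ) :
    (ρ (Ioi a)).toReal = 1 - (ρ (Iic a)).toReal := by
  rw [← compl_Iic, measure_compl measurableSet_Iic (measure_ne_top _ _), measure_univ,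
    ENNReal.toReal_sub_of_le prob_le_one ENNReal.one_ne_top, ENNReal.toReal_one]

lemma stmt1_interval {ν μ : Measure ℝ} [IsProbabilityMeasure ν] [IsProbabilityMeasure μ]
    (hatom : ∀ x : ℝ, μ {x} = 0) {δ η : ℝ} (hδ : 0 ≤ δ) (hη : 0 ≤ η)
    (hunif : ∀ x, |(ν (Iic x)).toReal - (μ (Iic x)).toReal| ≤ δ)
    (hleft : ∀ a : ℝ, ∃ y < a, (μ (Iic a)).toReal - (μ (Iic y)).toReal ≤ η)
    {I : Set ℝ} (hI : I.OrdConnected) (hne : I.Nonempty) :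
    |(ν I).toReal - (μ I).toReal| ≤ 2 * δ + η := by
  have hpt : ∀ (A B : Set ℝ) (x : ℝ), A ⊆ B → B ⊆ A ∪ {x} → μ B = μ A := by
    intro A B x h1 h2
    refine le_antisymm ?_ (measure_mono h1)
    calc μ B ≤ μ (A ∪ {x}) := measure_mono h2
      _ ≤ μ A + μ {x} := measure_union_le _ _
      _ = μ A := by rw [hatom, add_zero]
  have hmono : ∀ (ρ : Measure ℝ) (_ : IsProbabilityMeasure ρ) {A B : Set ℝ}, A ⊆ B →
      (ρ A).toReal ≤ (ρ B).toReal := by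
    intro ρ hρ A B h
    exact ENNReal.toReal_mono (measure_ne_top _ _) (measure_mono h)
  have hFmono : ∀ {x y : ℝ}, x ≤ y → (μ (Iic x)).toReal ≤ (μ (Iic y)).toReal := by
    intro x y h
    exact hmono μ inferInstance (Iic_subset_Iic.2 h)
  by_cases hA : BddAbove I <;> by_cases hB : BddBelow I
  · -- bounded
    set a := sInf I with ha
    set b := sSup I with hb
    have hab : a ≤ b := csInf_le_csSup hne hB hA
    have hsub1 : I ⊆ Icc a b := fun x hx => ⟨csInf_le hB hx, le_csSup hA hx⟩
    have hsub2 : Ioo a b ⊆ I := by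
      rintro x ⟨h1, h2⟩
      obtain ⟨p, hp, hpx⟩ := exists_lt_of_csInf_lt hne h1
      obtain ⟨q, hq, hxq⟩ := exists_lt_of_lt_csSup hne h2
      exact hI.out hp hq ⟨hpx.le, hxq.le⟩
    have eIoc : μ (Ioc a b) = μ (Ioo a b) := by
      refine hpt _ _ b Ioo_subset_Ioc_self ?_
      rintro x ⟨h1, h2⟩
      rcases lt_or_eq_of_le h2 with h | h
      · exact Or.inl ⟨h1, h⟩
      · exact Or.inr (by simp [h])
    have eIcc : μ (Icc a b) = μ (Ioc a b) := by
      refine hpt _ _ a Ioc_subset_Icc_self ?_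
      rintro x ⟨h1, h2⟩
      rcases lt_or_eq_of_le h1 with h | h
      · exact Or.inl ⟨h, h2⟩
      · exact Or.inr (by simp [← h])
    have hμI : μ I = μ (Ioc a b) := by
      refine le_antisymm ?_ ?_
      · rw [← eIcc]; exact measure_mono hsub1
      · rw [eIoc]; exact measure_mono hsub2
    have hBval : (μ I).toReal = (μ (Iic b)).toReal - (μ (Iic a)).toReal := by
      rw [hμI, stmt1_toReal_Ioc μ hab]
    obtain ⟨y, hy, hyη⟩ := hleft a
    obtain ⟨z, hz, hzη⟩ := hleft b
    have hub : (ν I).toReal ≤ (μ I).toReal + (2 * δ + η) := by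
      have hsub : I ⊆ Ioc y b := fun x hx => ⟨lt_of_lt_of_le hy (hsub1 hx).1, (hsub1 hx).2⟩
      have h1 := hmono ν inferInstance hsub
      rw [stmt1_toReal_Ioc ν (le_trans hy.le hab)] at h1
      have h2 := abs_le.mp (hunif b)
      have h3 := abs_le.mp (hunif y)
      rw [hBval]
      linarith [h1, h2.2, h3.1]
    have hlb : (μ I).toReal - (2 * δ + η) ≤ (ν I).toReal := by
      by_cases haz : a < z
      · have hsub : Ioc a z ⊆ I := fun x hx => hsub2 ⟨hx.1, lt_of_le_of_lt hx.2 hz⟩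
        have h1 := hmono ν inferInstance hsub
        rw [stmt1_toReal_Ioc ν haz.le] at h1
        have h2 := abs_le.mp (hunif z)
        have h3 := abs_le.mp (hunif a)
        rw [hBval]
        linarith [h1, h2.1, h3.2]
      · have h4 : (μ (Iic z)).toReal ≤ (μ (Iic a)).toReal := hFmono (not_lt.mp haz)
        rw [hBval]
        linarith [ENNReal.toReal_nonneg (a := ν I)]
    rw [abs_le]; constructor <;> linarith
  · -- bddAbove, not bddBelow
    set b := sSup I with hb
    have hsub1 : I ⊆ Iic b := fun x hx => le_csSup hA hx
    have hsub2 : Iio b ⊆ I := by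
      intro x hx
      obtain ⟨q, hq, hxq⟩ := exists_lt_of_lt_csSup hne hx
      obtain ⟨p, hp, hpx⟩ := not_bddBelow_iff.mp hB x
      exact hI.out hp hq ⟨hpx.le, hxq.le⟩
    have eIic : μ (Iic b) = μ (Iio b) := by
      refine hpt _ _ b Iio_subset_Iic_self ?_
      intro x hx
      rcases lt_or_eq_of_le (mem_Iic.mp hx) with h | h
      · exact Or.inl h
      · exact Or.inr (by simp [h])
    have hμI : μ I = μ (Iic b) := by
      refine le_antisymm (measure_mono hsub1) ?_
      rw [eIic]; exact measure_mono hsub2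
    obtain ⟨z, hz, hzη⟩ := hleft b
    have hub : (ν I).toReal ≤ (μ I).toReal + (2 * δ + η) := by
      have h1 := hmono ν inferInstance hsub1
      have h2 := abs_le.mp (hunif b)
      rw [hμI]
      linarith [h1, h2.2]
    have hlb : (μ I).toReal - (2 * δ + η) ≤ (ν I).toReal := by
      have hsub : Iic z ⊆ I := fun x hx => hsub2 (lt_of_le_of_lt hx hz)
      have h1 := hmono ν inferInstance hsub
      have h2 := abs_le.mp (hunif z)
      rw [hμI]
      linarith [h1, h2.1]
    rw [abs_le]; constructor <;> linarith
  · -- not bddAbove, bddBelow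
    set a := sInf I with ha
    have hsub1 : I ⊆ Ici a := fun x hx => csInf_le hB hx
    have hsub2 : Ioi a ⊆ I := by
      intro x hx
      obtain ⟨p, hp, hpx⟩ := exists_lt_of_csInf_lt hne hx
      obtain ⟨q, hq, hxq⟩ := not_bddAbove_iff.mp hA x
      exact hI.out hp hq ⟨hpx.le, hxq.le⟩
    have eIci : μ (Ici a) = μ (Ioi a) := by
      refine hpt _ _ a Ioi_subset_Ici_self ?_
      intro x hx
      rcases lt_or_eq_of_le (mem_Ici.mp hx) with h | h
      · exact Or.inl h
      · exact Or.inr (by simp [← h])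
    have hμI : μ I = μ (Ioi a) := by
      refine le_antisymm ?_ (measure_mono hsub2)
      rw [← eIci]; exact measure_mono hsub1
    have hBval : (μ I).toReal = 1 - (μ (Iic a)).toReal := by
      rw [hμI, stmt1_toReal_Ioi μ a]
    obtain ⟨y, hy, hyη⟩ := hleft a
    have hub : (ν I).toReal ≤ (μ I).toReal + (2 * δ + η) := by
      have hsub : I ⊆ Ioi y := fun x hx => lt_of_lt_of_le hy (hsub1 hx)
      have h1 := hmono ν inferInstance hsub
      rw [stmt1_toReal_Ioi ν y] at h1
      have h3 := abs_le.mp (hunif y)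
      rw [hBval]
      linarith [h1, h3.1]
    have hlb : (μ I).toReal - (2 * δ + η) ≤ (ν I).toReal := by
      have h1 := hmono ν inferInstance hsub2
      rw [stmt1_toReal_Ioi ν a] at h1
      have h3 := abs_le.mp (hunif a)
      rw [hBval]
      linarith [h1, h3.2]
    rw [abs_le]; constructor <;> linarith
  · -- unbounded both sides : I = univ
    have hI' : I = univ := by
      refine eq_univ_of_forall fun x => ?_
      obtain ⟨p, hp, hpx⟩ := not_bddBelow_iff.mp hB x
      obtain ⟨q, hq, hxq⟩ := not_bddAbove_iff.mp hA x
      exact hI.out hp hq ⟨hpx.le, hxq.le⟩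
    rw [hI', measure_univ, measure_univ]
    simp
    positivity


set_option maxHeartbeats 1000000 in
/-- If probability measures `μn` on `ℝ` converge weakly to `μ = f·λ` with `f` a continuous
probability density, then the supremum over all intervals `I ⊆ ℝ` of positive length of
`|μn(I) − μ(I)|` tends to `0` as `n → ∞`. -/
theorem stmt_1 (f : ℝ → ℝ) (hf_cont : Continuous f) (hf_nonneg : ∀ x, 0 ≤ f x)
    (hf_int : Integrable f) (hf_one : ∫ x, f x = 1)
    (μn : ℕ → Measure ℝ) [∀ n, IsProbabilityMeasure (μn n)]
    (hweak : ∀ g : BoundedContinuousFunction ℝ ℝ,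
      Tendsto (fun n => ∫ x, g x ∂(μn n)) atTop (𝓝 (∫ x, g x * f x))) :
    ∀ ε > 0, ∃ N : ℕ, ∀ n ≥ N, ∀ I : Set ℝ, I.OrdConnected → MeasurableSet I →
      volume I ≠ 0 → |((μn n) I).toReal - ∫ x in I, f x| < ε := by
  intro ε hε
  haveI hPP := stmt1mu_prob hf_nonneg hf_int hf_one
  set F : ℝ → ℝ := fun x => ((stmt1mu f) (Iic x)).toReal with hFdef
  have hFeq : F = fun x => ∫ t in Iic x, f t :=
    funext fun x => stmt1mu_apply hf_nonneg hf_int measurableSet_Iic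
  have hFcont : Continuous F := by rw [hFeq]; exact stmt1F_cont hf_int
  have hFmono : Monotone F := fun x y h =>
    ENNReal.toReal_mono (measure_ne_top _ _) (measure_mono (Iic_subset_Iic.2 h))
  have hε4 : (0:ℝ) < ε / 4 := by linarith
  -- uniform convergence of the CDFs
  set Fn : ℕ → ℝ → ℝ := fun n x => ((μn n) (Iic x)).toReal with hFndef
  have hFnmono : ∀ n, Monotone (Fn n) := fun n x y h =>
    ENNReal.toReal_mono (measure_ne_top _ _) (measure_mono (Iic_subset_Iic.2 h))
  have hFn0 : ∀ n x, 0 ≤ Fn n x := fun n x => ENNReal.toReal_nonneg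
  have hFn1 : ∀ n x, Fn n x ≤ 1 := by
    intro n x
    have h := prob_le_one (μ := μn n) (s := Iic x)
    calc Fn n x ≤ (1 : ℝ≥0∞).toReal := ENNReal.toReal_mono ENNReal.one_ne_top h
      _ = 1 := ENNReal.toReal_one
  have hFnconv : ∀ x, Tendsto (fun n => Fn n x) atTop (𝓝 (F x)) := fun x =>
    stmt1_pointwise hf_cont hf_nonneg hf_int hf_one μn hweak x
  obtain ⟨N, hN⟩ := stmt1_polya hFcont hFmono (stmt1F_top hf_nonneg hf_int hf_one)
    (stmt1F_bot hf_nonneg hf_int hf_one) hFnmono hFn0 hFn1 hFnconv (ε / 4) hε4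
  -- left-limit control for F
  have hleft : ∀ a : ℝ, ∃ y < a, F a - F y ≤ ε / 4 := by
    intro a
    have ht : Tendsto F (𝓝[<] a) (𝓝 (F a)) := (hFcont.tendsto a).mono_left nhdsWithin_le_nhds
    have h1 := Metric.tendsto_nhds.mp ht (ε / 4) hε4
    obtain ⟨y, hy1, hy2⟩ := (h1.and eventually_mem_nhdsWithin).exists
    refine ⟨y, hy2, ?_⟩
    rw [Real.dist_eq] at hy1
    have := abs_le.mp hy1.le
    linarith [this.1]
  refine ⟨N, fun n hn I hIoc hImeas hIvol => ?_⟩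
  have hne : I.Nonempty := by
    rw [Set.nonempty_iff_ne_empty]
    rintro rfl
    exact hIvol (measure_empty)
  have key := stmt1_interval (ν := μn n) (μ := stmt1mu f) (stmt1mu_singleton f)
    hε4.le hε4.le (fun x => hN n hn x) hleft hIoc hne
  rw [stmt1mu_apply hf_nonneg hf_int hImeas] at key
  calc |((μn n) I).toReal - ∫ x in I, f x| ≤ 2 * (ε/4) + ε/4 := key
    _ < ε := by linarith
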